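/- Let f : {0,1}^n → {0,1} be a Boolean function with Möbius support S_f = {S : f̃(S) ≠ 0}. For any two distinct sets S, T ∈ S_f with S ∪ T ∉ S_f, there exist U, V ∈ S_f with {U,V} ≠ {S,T} and U ∪ V = S ∪ T. -/
import Mathlib


/-- `AND_S(x) = ∏_{i ∈ S} x_i` as a real number. -/
def andR {n : ℕ} (S : Finset (Fin n)) (x : Fin n → Bool) : ℝ :=
  ∏ i ∈ S, (if x i then (1 : ℝ) else 0)

lemma andR_eq {n : ℕ} (S : Finset (Fin n)) (x : Fin n → Bool) :
    andR S x = if ∀ i ∈ S, x i then 1 else 0 := by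
  unfold andR
  split
  · next h => exact Finset.prod_eq_one fun i hi => by simp [h i hi]
  · next h =>
      push_neg at h
      obtain ⟨i, hi, hx⟩ := h
      exact Finset.prod_eq_zero hi (by simp [hx])

lemma andR_mul {n : ℕ} (U V : Finset (Fin n)) (x : Fin n → Bool) :
    andR U x * andR V x = andR (U ∪ V) x := by
  rw [andR_eq, andR_eq, andR_eq]
  by_cases h1 : ∀ i ∈ U, x i = true
  · by_cases h2 : ∀ i ∈ V, x i = true
    · rw [if_pos h1, if_pos h2, if_pos (Finset.forall_mem_union.2 ⟨h1, h2⟩), one_mul]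
    · rw [if_neg h2, if_neg (fun h => h2 (Finset.forall_mem_union.1 h).2), mul_zero]
  · rw [if_neg h1, if_neg (fun h => h1 (Finset.forall_mem_union.1 h).1), zero_mul]

/-- Uniqueness of Möbius coefficients: if all partial sums over powersets vanish,
then all coefficients vanish. -/
lemma mobius_uniq {n : ℕ} (d : Finset (Fin n) → ℝ)
    (h : ∀ A : Finset (Fin n), ∑ B ∈ A.powerset, d B = 0) :
    ∀ A, d A = 0 := by
  intro A
  induction A using Finset.strongInduction with
  | _ A ih =>
    have hA := h A
    have hmem : A ∈ A.powerset := Finset.mem_powerset_self A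
    rw [← Finset.add_sum_erase _ _ hmem] at hA
    have : ∑ B ∈ A.powerset.erase A, d B = 0 := by
      apply Finset.sum_eq_zero
      intro B hB
      rw [Finset.mem_erase, Finset.mem_powerset] at hB
      exact ih B (lt_of_le_of_ne hB.2 hB.1)
    linarith

set_option maxHeartbeats 2000000 in
theorem stmt2 (n : ℕ) (f : (Fin n → Bool) → Bool) (c : Finset (Fin n) → ℝ)
    (hf : ∀ x, (if f x then (1 : ℝ) else 0) = ∑ S : Finset (Fin n), c S * andR S x)
    (S T : Finset (Fin n)) (hST : S ≠ T) (hS : c S ≠ 0) (hT : c T ≠ 0)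
    (hUnion : c (S ∪ T) = 0) :
    ∃ U V : Finset (Fin n), c U ≠ 0 ∧ c V ≠ 0 ∧
      ({U, V} : Finset (Finset (Fin n))) ≠ {S, T} ∧ U ∪ V = S ∪ T := by
  -- the "convolution square" coefficients
  set g : Finset (Fin n) → ℝ := fun W =>
    ∑ p ∈ (Finset.univ ×ˢ Finset.univ : Finset (Finset (Fin n) × Finset (Fin n))) with
        p.1 ∪ p.2 = W, c p.1 * c p.2 with hg
  -- f = f², so the Möbius expansions of f and f² agree
  have key : ∀ W, c W = g W := by
    have hzero : ∀ A : Finset (Fin n), ∑ B ∈ A.powerset, (c B - g B) = 0 := by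
      intro A
      -- evaluate both expansions at the indicator of A
      set x : Fin n → Bool := fun i => decide (i ∈ A) with hx
      have handA : ∀ B : Finset (Fin n), andR B x = if B ⊆ A then 1 else 0 := by
        intro B
        rw [andR_eq]
        congr 1
        simp [hx, Finset.subset_iff]
      have hF2 : (∑ B : Finset (Fin n), c B * andR B x)
          = ∑ B : Finset (Fin n), g B * andR B x := by
        have hsq : (∑ B : Finset (Fin n), c B * andR B x)
            = (∑ B : Finset (Fin n), c B * andR B x) *
              (∑ B : Finset (Fin n), c B * andR B x) := by
          rw [← hf x]
          by_cases hfx : f x <;> simp [hfx]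
        rw [hsq, Finset.sum_mul_sum]
        have : ∀ U : Finset (Fin n), ∀ V : Finset (Fin n),
            (c U * andR U x) * (c V * andR V x) = c U * c V * andR (U ∪ V) x := by
          intro U V
          rw [← andR_mul]; ring
        calc (∑ U : Finset (Fin n), ∑ V : Finset (Fin n),
                (c U * andR U x) * (c V * andR V x))
            = ∑ p ∈ (Finset.univ ×ˢ Finset.univ :
                Finset (Finset (Fin n) × Finset (Fin n))),
                c p.1 * c p.2 * andR (p.1 ∪ p.2) x := by
              rw [Finset.sum_product]
              exact Finset.sum_congr rfl fun U _ =>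
                Finset.sum_congr rfl fun V _ => this U V
          _ = ∑ B : Finset (Fin n), ∑ p ∈ (Finset.univ ×ˢ Finset.univ :
                Finset (Finset (Fin n) × Finset (Fin n))) with p.1 ∪ p.2 = B,
                c p.1 * c p.2 * andR (p.1 ∪ p.2) x := by
              exact (Finset.sum_fiberwise
                (Finset.univ ×ˢ Finset.univ : Finset (Finset (Fin n) × Finset (Fin n)))
                (fun p => p.1 ∪ p.2)
                (fun p => c p.1 * c p.2 * andR (p.1 ∪ p.2) x)).symm
          _ = ∑ B : Finset (Fin n), g B * andR B x := by
              refine Finset.sum_congr rfl fun B _ => ?_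
              rw [hg, Finset.sum_mul]
              refine Finset.sum_congr rfl fun p hp => ?_
              rw [(Finset.mem_filter.1 hp).2]
      have : ∑ B : Finset (Fin n), (c B - g B) * andR B x = 0 := by
        simp only [sub_mul, Finset.sum_sub_distrib, hF2, sub_self]
      calc ∑ B ∈ A.powerset, (c B - g B)
          = ∑ B : Finset (Fin n), if B ⊆ A then (c B - g B) else 0 := by
            rw [← Finset.sum_filter]
            refine Finset.sum_congr ?_ fun _ _ => rfl
            ext B; simp
        _ = ∑ B : Finset (Fin n), (c B - g B) * andR B x := by
            refine Finset.sum_congr rfl fun B _ => ?_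
            rw [handA B, mul_ite, mul_one, mul_zero]
        _ = 0 := this
    intro W
    have := mobius_uniq _ hzero W
    linarith
  -- now work at W = S ∪ T
  by_contra hcon
  push_neg at hcon
  have hgW : g (S ∪ T) = 0 := by rw [← key]; exact hUnion
  -- the only surviving pairs would be (S,T) and (T,S)
  have hsum : g (S ∪ T) = c S * c T + c T * c S := by
    rw [hg]
    dsimp only
    have hsub : ({(S, T), (T, S)} : Finset (Finset (Fin n) × Finset (Fin n))) ⊆
        (Finset.univ ×ˢ Finset.univ).filter (fun p => p.1 ∪ p.2 = S ∪ T) := by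
      intro p hp
      simp only [Finset.mem_insert, Finset.mem_singleton] at hp
      rcases hp with rfl | rfl <;> simp [Finset.union_comm]
    rw [← Finset.sum_subset hsub]
    · rw [Finset.sum_pair (by simp [hST] : ((S, T) : _ × _) ≠ (T, S))]
    · intro p hp hnp
      rw [Finset.mem_filter] at hp
      simp only [Finset.mem_insert, Finset.mem_singleton] at hnp
      push_neg at hnp
      by_contra hne
      have h1 : c p.1 ≠ 0 := fun h => hne (by rw [h, zero_mul])
      have h2 : c p.2 ≠ 0 := fun h => hne (by rw [h, mul_zero])
      have hpair : ({p.1, p.2} : Finset (Finset (Fin n))) = {S, T} := by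
        by_contra hpe
        exact (hcon p.1 p.2 h1 h2 hpe) hp.2
      -- from the pair equality deduce p = (S,T) or p = (T,S)
      have hm1 : p.1 ∈ ({S, T} : Finset (Finset (Fin n))) := by
        rw [← hpair]; simp
      have hm2 : p.2 ∈ ({S, T} : Finset (Finset (Fin n))) := by
        rw [← hpair]; simp
      simp only [Finset.mem_insert, Finset.mem_singleton] at hm1 hm2
      have hSm : S ∈ ({p.1, p.2} : Finset (Finset (Fin n))) := by
        rw [hpair]; simp
      have hTm : T ∈ ({p.1, p.2} : Finset (Finset (Fin n))) := by
        rw [hpair]; simp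
      simp only [Finset.mem_insert, Finset.mem_singleton] at hSm hTm
      rcases hm1 with h1' | h1' <;> rcases hm2 with h2' | h2'
      · rcases hTm with hT' | hT'
        · exact hST (h1' ▸ hT'.symm)
        · exact hST (h2' ▸ hT'.symm)
      · exact hnp.1 (Prod.ext h1' h2')
      · exact hnp.2 (Prod.ext h1' h2')
      · rcases hSm with hS' | hS'
        · exact hST (h1' ▸ hS'.symm).symm
        · exact hST (h2' ▸ hS'.symm).symm
  rw [hgW] at hsum
  exact mul_ne_zero hS hT (by linarith [mul_comm (c S) (c T)])
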